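/- Let (M, N, ∂) be a crossed module, K a field, K(M ⋊ N) its group algebra with σ(e_{m,n}) = e_n, τ(e_{m,n}) = e_{∂(m)n}, and J the cocycle ideal generated by e_{m'm,n} − e_{m,n} − e_{m',∂(m)n} + e_{1,∂(m)n}. Then σ(J) = 0 and τ(J) = 0, so σ and τ descend to well-defined algebra homomorphisms σ̄, τ̄: K(M ⋊ N)/J → K(N), and in the quotient the kernel condition ker σ̄ · ker τ̄ = 0 holds. -/

import Mathlib

open MonoidAlgebra TwoSidedIdeal

/-- Lift a ring hom vanishing on a two-sided ideal to the quotient. -/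
def tsiLift {R S : Type*} [Ring R] [Ring S] (I : TwoSidedIdeal R) (f : R →+* S)
    (hf : ∀ x ∈ I, f x = 0) : I.ringCon.Quotient →+* S where
  toFun := fun x => Quotient.liftOn' x f (fun a b h => by
    have hm : a - b ∈ I := (I.rel_iff a b).1 h
    have := hf _ hm
    rwa [map_sub, sub_eq_zero] at this)
  map_one' := map_one f
  map_mul' := fun x y => Quotient.inductionOn₂' x y fun a b => map_mul f a b
  map_zero' := map_zero f
  map_add' := fun x y => Quotient.inductionOn₂' x y fun a b => map_add f a b

theorem tsiLift_coe {R S : Type*} [Ring R] [Ring S] (I : TwoSidedIdeal R) (f : R →+* S)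
    (hf : ∀ x ∈ I, f x = 0) (x : R) : tsiLift I f hf (x : I.ringCon.Quotient) = f x := rfl

/-- σ and τ vanish on the cocycle ideal J, hence descend to
well-defined homomorphisms σ̄, τ̄ on the quotient K(M ⋊ N)/J, and in the
quotient the kernel condition ker σ̄ · ker τ̄ = 0 holds. -/
theorem cocycleQuotient_cat1Algebra
    {K M N : Type*} [Field K] [Group M] [Group N]
    (φ : N →* MulAut M) (d : M →* N)
    (h1 : ∀ (n : N) (m : M), d (φ n m) = n * d m * n⁻¹)
    (h2 : ∀ m m' : M, φ (d m) m' = m * m' * m⁻¹)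
    (σ τ : MonoidAlgebra K (M ⋊[φ] N) →ₐ[K] MonoidAlgebra K N)
    (hσ : ∀ g : M ⋊[φ] N, σ (MonoidAlgebra.of K (M ⋊[φ] N) g) =
        MonoidAlgebra.of K N g.right)
    (hτ : ∀ g : M ⋊[φ] N, τ (MonoidAlgebra.of K (M ⋊[φ] N) g) =
        MonoidAlgebra.of K N (d g.left * g.right)) :
    let e : M ⋊[φ] N → MonoidAlgebra K (M ⋊[φ] N) :=
      fun g => MonoidAlgebra.of K (M ⋊[φ] N) g
    let J : TwoSidedIdeal (MonoidAlgebra K (M ⋊[φ] N)) :=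
      TwoSidedIdeal.span {x | ∃ (a b : M) (c : N),
        x = e ⟨b * a, c⟩ - e ⟨a, c⟩ - e ⟨b, d a * c⟩ + e ⟨1, d a * c⟩}
    (∀ x ∈ J, σ x = 0) ∧ (∀ x ∈ J, τ x = 0) ∧
    ∃ σb τb : J.ringCon.Quotient →+* MonoidAlgebra K N,
      (∀ x : MonoidAlgebra K (M ⋊[φ] N), σb x = σ x) ∧
      (∀ x : MonoidAlgebra K (M ⋊[φ] N), τb x = τ x) ∧
      (∀ x y : J.ringCon.Quotient, σb x = 0 → τb y = 0 → x * y = 0) := by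
  intro e J
  -- σ kills J
  have hJσ : ∀ x ∈ J, σ x = 0 := by
    intro x hx
    refine (TwoSidedIdeal.mem_ker σ).1 (TwoSidedIdeal.mem_span_iff.1 hx _ ?_)
    rintro y ⟨a, b, c, rfl⟩
    rw [SetLike.mem_coe, TwoSidedIdeal.mem_ker]
    simp only [e, map_add, map_sub, hσ]
    abel
  -- τ kills J
  have hJτ : ∀ x ∈ J, τ x = 0 := by
    intro x hx
    refine (TwoSidedIdeal.mem_ker τ).1 (TwoSidedIdeal.mem_span_iff.1 hx _ ?_)
    rintro y ⟨a, b, c, rfl⟩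
    rw [SetLike.mem_coe, TwoSidedIdeal.mem_ker]
    simp only [e, map_add, map_sub, hτ, map_mul, map_one, one_mul, mul_assoc]
    abel
  refine ⟨hJσ, hJτ, tsiLift J σ.toRingHom hJσ, tsiLift J τ.toRingHom hJτ,
    fun x => rfl, fun x => rfl, ?_⟩
  -- kernel condition
  -- the embedding ι : K[N] → K[M⋊N]
  set ι : MonoidAlgebra K N →ₐ[K] MonoidAlgebra K (M ⋊[φ] N) :=
    MonoidAlgebra.mapDomainAlgHom K K (SemidirectProduct.inr (φ := φ)) with hι
  have hιof : ∀ n : N, ι (MonoidAlgebra.of K N n) =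
      e ⟨1, n⟩ := by
    intro n
    show MonoidAlgebra.mapDomain _ (MonoidAlgebra.single n 1) = _
    rw [MonoidAlgebra.mapDomain_single]
    rfl
  -- span of the v's and w's
  set V : Submodule K (MonoidAlgebra K (M ⋊[φ] N)) :=
    Submodule.span K {x | ∃ g : M ⋊[φ] N, x = e g - e ⟨1, g.right⟩} with hV
  set W : Submodule K (MonoidAlgebra K (M ⋊[φ] N)) :=
    Submodule.span K {x | ∃ g : M ⋊[φ] N, x = e g - e ⟨1, d g.left * g.right⟩} with hW
  have hVmem : ∀ u, u - ι (σ u) ∈ V := by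
    intro u
    induction u using MonoidAlgebra.induction_on with
    | of g =>
      rw [hσ, hιof]
      exact Submodule.subset_span ⟨g, rfl⟩
    | add f g hf hg =>
      have : f + g - ι (σ (f + g)) = (f - ι (σ f)) + (g - ι (σ g)) := by
        rw [map_add, map_add]; abel
      rw [this]; exact V.add_mem hf hg
    | smul r f hf =>
      have : r • f - ι (σ (r • f)) = r • (f - ι (σ f)) := by
        rw [map_smul, map_smul, smul_sub]
      rw [this]; exact V.smul_mem r hf
  have hWmem : ∀ u, u - ι (τ u) ∈ W := by
    intro u
    induction u using MonoidAlgebra.induction_on with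
    | of g =>
      rw [hτ, hιof]
      exact Submodule.subset_span ⟨g, rfl⟩
    | add f g hf hg =>
      have : f + g - ι (τ (f + g)) = (f - ι (τ f)) + (g - ι (τ g)) := by
        rw [map_add, map_add]; abel
      rw [this]; exact W.add_mem hf hg
    | smul r f hf =>
      have : r • f - ι (τ (r • f)) = r • (f - ι (τ f)) := by
        rw [map_smul, map_smul, smul_sub]
      rw [this]; exact W.smul_mem r hf
  -- generator products lie in J
  have hsmulJ : ∀ (k : K) (x : MonoidAlgebra K (M ⋊[φ] N)), x ∈ J → k • x ∈ J := by
    intro k x hx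
    rw [Algebra.smul_def]
    exact J.mul_mem_left _ _ hx
  have key : ∀ g h : M ⋊[φ] N,
      (e g - e ⟨1, g.right⟩) * (e h - e ⟨1, d h.left * h.right⟩) ∈ J := by
    rintro ⟨m, n⟩ ⟨m', n'⟩
    have hda : d (φ n m') * (n * n') = n * (d m' * n') := by
      rw [h1]; group
    have hgen : e ⟨m * φ n m', n * n'⟩ - e ⟨φ n m', n * n'⟩
        - e ⟨m, n * (d m' * n')⟩ + e ⟨1, n * (d m' * n')⟩ ∈ J := by
      have hx : e ⟨m * φ n m', n * n'⟩ - e ⟨φ n m', n * n'⟩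
          - e ⟨m, d (φ n m') * (n * n')⟩ + e ⟨1, d (φ n m') * (n * n')⟩ ∈ J :=
        TwoSidedIdeal.subset_span ⟨φ n m', m, n * n', rfl⟩
      rwa [hda] at hx
    have hprod : (e ⟨m, n⟩ - e ⟨1, n⟩) * (e ⟨m', n'⟩ - e ⟨1, d m' * n'⟩) =
        e ⟨m * φ n m', n * n'⟩ - e ⟨φ n m', n * n'⟩
        - e ⟨m, n * (d m' * n')⟩ + e ⟨1, n * (d m' * n')⟩ := by
      have emul : ∀ g h : M ⋊[φ] N, e g * e h = e (g * h) := fun g h =>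
        ((MonoidAlgebra.of K (M ⋊[φ] N)).map_mul g h).symm
      rw [sub_mul, mul_sub, mul_sub, emul, emul, emul, emul]
      have c1 : (⟨m, n⟩ : M ⋊[φ] N) * ⟨m', n'⟩ = ⟨m * φ n m', n * n'⟩ := rfl
      have c2 : (⟨m, n⟩ : M ⋊[φ] N) * ⟨1, d m' * n'⟩ = ⟨m, n * (d m' * n')⟩ := by
        ext <;> simp [SemidirectProduct.mul_left, SemidirectProduct.mul_right]
      have c3 : (⟨1, n⟩ : M ⋊[φ] N) * ⟨m', n'⟩ = ⟨φ n m', n * n'⟩ := by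
        ext <;> simp [SemidirectProduct.mul_left, SemidirectProduct.mul_right]
      have c4 : (⟨1, n⟩ : M ⋊[φ] N) * ⟨1, d m' * n'⟩ = ⟨1, n * (d m' * n')⟩ := by
        ext <;> simp [SemidirectProduct.mul_left, SemidirectProduct.mul_right]
      rw [c1, c2, c3, c4]
      abel
    rwa [← hprod] at hgen
  -- products of V and W members lie in J
  have hVW : ∀ v ∈ V, ∀ w ∈ W, v * w ∈ J := by
    intro v hv
    induction hv using Submodule.span_induction with
    | mem x hx =>
      obtain ⟨g, rfl⟩ := hx
      intro w hw
      induction hw using Submodule.span_induction with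
      | mem y hy =>
        obtain ⟨h, rfl⟩ := hy
        exact key g h
      | zero => simpa using J.zero_mem
      | add y z _ _ hy hz =>
        rw [mul_add]; exact J.add_mem hy hz
      | smul k y _ hy =>
        rw [mul_smul_comm]; exact hsmulJ k _ hy
    | zero => intro w _; simpa using J.zero_mem
    | add y z _ _ hy hz =>
      intro w hw; rw [add_mul]; exact J.add_mem (hy w hw) (hz w hw)
    | smul k y _ hy =>
      intro w hw; rw [smul_mul_assoc]; exact hsmulJ k _ (hy w hw)
  -- conclude
  intro x y hx hy
  obtain ⟨a, rfl⟩ := Quot.exists_rep x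
  obtain ⟨b, rfl⟩ := Quot.exists_rep y
  have ha : σ a = 0 := hx
  have hb : τ b = 0 := hy
  have haV : a ∈ V := by simpa [ha] using hVmem a
  have hbW : b ∈ W := by simpa [hb] using hWmem b
  have hab : a * b ∈ J := hVW a haV b hbW
  show ((a * b : MonoidAlgebra K (M ⋊[φ] N)) : J.ringCon.Quotient) = 0
  have : ((a * b : MonoidAlgebra K (M ⋊[φ] N)) : J.ringCon.Quotient)
      = ((0 : MonoidAlgebra K (M ⋊[φ] N)) : J.ringCon.Quotient) :=
    (RingCon.eq _).2 ((J.rel_iff _ _).2 (by simpa using hab))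
  simpa using this
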